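/- Let ℓ ≥ 1 and x_0 > 0, and let Φ(re^{iθ}) = r^ℓ e^{iℓθ} be the conformal map from the sector S = {re^{iθ} : r > 0, |θ| < π/(2ℓ)} onto the right half-plane. Let D_*(J) denote the Euclidean disk with the bounded interval J ⊂ ℝ as a diameter. Then Φ^{-1}(D_*((0, x_0^ℓ))) ⊂ D_*((0, x_0)). -/

import Mathlib

open Real

lemma key_cos (ℓ θ : ℝ) (hℓ : 1 ≤ ℓ) (hθ0 : 0 ≤ θ) (hθ : ℓ * θ < π / 2) :
    Real.cos (ℓ * θ) ≤ Real.cos θ ^ ℓ := by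
  have hℓ0 : (0:ℝ) < ℓ := lt_of_lt_of_le one_pos hℓ
  have hθle : θ ≤ ℓ * θ := le_mul_of_one_le_left hθ0 hℓ
  have hθhalf : θ < π / 2 := lt_of_le_of_lt hθle hθ
  have hπ : 0 < π := Real.pi_pos
  have hcosθ : 0 < Real.cos θ := Real.cos_pos_of_mem_Ioo ⟨by linarith, hθhalf⟩
  have hcosℓθ : 0 < Real.cos (ℓ * θ) := Real.cos_pos_of_mem_Ioo ⟨by nlinarith, hθ⟩
  set F : ℝ → ℝ := fun s => ℓ * Real.log (Real.cos s) - Real.log (Real.cos (ℓ * s)) with hF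
  -- derivative at every point of Icc 0 θ
  have hderiv : ∀ s ∈ Set.Icc 0 θ, HasDerivAt F
      (ℓ * (-Real.sin s / Real.cos s) - -Real.sin (ℓ * s) * ℓ / Real.cos (ℓ * s)) s := by
    intro s hs
    have hs0 : 0 ≤ s := hs.1
    have hsθ : s ≤ θ := hs.2
    have hcs : 0 < Real.cos s :=
      Real.cos_pos_of_mem_Ioo ⟨by linarith, lt_of_le_of_lt hsθ hθhalf⟩
    have hls : ℓ * s ≤ ℓ * θ := by nlinarith
    have hcls : 0 < Real.cos (ℓ * s) :=
      Real.cos_pos_of_mem_Ioo ⟨by nlinarith, lt_of_le_of_lt hls hθ⟩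
    have h1 : HasDerivAt (fun s => Real.log (Real.cos s)) (-Real.sin s / Real.cos s) s :=
      (Real.hasDerivAt_cos s).log hcs.ne'
    have h2 : HasDerivAt (fun s : ℝ => Real.cos (ℓ * s)) (-Real.sin (ℓ * s) * ℓ) s := by
      have := (Real.hasDerivAt_cos (ℓ * s)).comp s ((hasDerivAt_id s).const_mul ℓ)
      exact this.congr_deriv (by ring)
    have h3 : HasDerivAt (fun s : ℝ => Real.log (Real.cos (ℓ * s)))
        (-Real.sin (ℓ * s) * ℓ / Real.cos (ℓ * s)) s := h2.log hcls.ne'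
    exact (h1.const_mul ℓ).sub h3
  have hmono : MonotoneOn F (Set.Icc 0 θ) := by
    apply monotoneOn_of_deriv_nonneg (convex_Icc 0 θ)
    · intro s hs; exact (hderiv s hs).continuousAt.continuousWithinAt
    · intro s hs
      rw [interior_Icc] at hs
      exact (hderiv s (Set.mem_Icc_of_Ioo hs)).differentiableAt.differentiableWithinAt
    · intro s hs
      rw [interior_Icc] at hs
      rw [(hderiv s (Set.mem_Icc_of_Ioo hs)).deriv]
      have hs0 : 0 < s := hs.1
      have hsθ : s < θ := hs.2
      have hs2 : s < π / 2 := lt_trans hsθ hθhalf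
      have hls2 : ℓ * s < π / 2 := lt_of_le_of_lt (by nlinarith) hθ
      have htan : Real.tan s ≤ Real.tan (ℓ * s) := by
        rcases eq_or_lt_of_le (le_mul_of_one_le_left hs0.le hℓ) with h | h
        · rw [← h]
        · exact (Real.tan_lt_tan_of_nonneg_of_lt_pi_div_two hs0.le hls2 h).le
      rw [Real.tan_eq_sin_div_cos, Real.tan_eq_sin_div_cos] at htan
      have hcs : 0 < Real.cos s := Real.cos_pos_of_mem_Ioo ⟨by linarith, hs2⟩
      have hcls : 0 < Real.cos (ℓ * s) := Real.cos_pos_of_mem_Ioo ⟨by nlinarith, hls2⟩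
      have : ℓ * (Real.sin s / Real.cos s) ≤ ℓ * (Real.sin (ℓ * s) / Real.cos (ℓ * s)) :=
        mul_le_mul_of_nonneg_left htan hℓ0.le
      rw [sub_nonneg]
      calc ℓ * (-Real.sin s / Real.cos s) = -(ℓ * (Real.sin s / Real.cos s)) := by ring
        _ ≥ -(ℓ * (Real.sin (ℓ * s) / Real.cos (ℓ * s))) := by linarith
        _ = -Real.sin (ℓ * s) * ℓ / Real.cos (ℓ * s) := by ring
  have h0 : F 0 ≤ F θ := hmono (Set.left_mem_Icc.2 hθ0) (Set.right_mem_Icc.2 hθ0) hθ0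
  have hF0 : F 0 = 0 := by simp [hF]
  rw [hF0, hF] at h0
  have h0' : 0 ≤ ℓ * Real.log (Real.cos θ) - Real.log (Real.cos (ℓ * θ)) := h0
  have hle : Real.log (Real.cos (ℓ * θ)) ≤ Real.log (Real.cos θ) * ℓ := by linarith
  calc Real.cos (ℓ * θ) = Real.exp (Real.log (Real.cos (ℓ * θ))) := (Real.exp_log hcosℓθ).symm
    _ ≤ Real.exp (Real.log (Real.cos θ) * ℓ) := Real.exp_le_exp.2 hle
    _ = Real.cos θ ^ ℓ := (Real.rpow_def_of_pos hcosθ ℓ).symm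

theorem stmt6 (ℓ : ℝ) (hℓ : 1 ≤ ℓ) (x₀ : ℝ) (hx₀ : 0 < x₀) (z : ℂ) (hz : z ≠ 0)
    (harg : |Complex.arg z| < π / (2 * ℓ))
    (hmem : z ^ (ℓ : ℂ) ∈ Metric.ball ((x₀ ^ ℓ / 2 : ℝ) : ℂ) (x₀ ^ ℓ / 2)) :
    z ∈ Metric.ball ((x₀ / 2 : ℝ) : ℂ) (x₀ / 2) := by
  have hℓ0 : (0:ℝ) < ℓ := lt_of_lt_of_le one_pos hℓ
  have hπ : 0 < π := Real.pi_pos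
  set θ := Complex.arg z with hθdef
  set r := ‖z‖ with hrdef
  have hr : 0 < r := norm_pos_iff.mpr hz
  have hargℓ : ℓ * |θ| < π / 2 := by
    have := mul_lt_mul_of_pos_left harg hℓ0
    calc ℓ * |θ| < ℓ * (π / (2 * ℓ)) := this
      _ = π / 2 := by field_simp
  -- compute z ^ ℓ
  have hcpow : z ^ (ℓ:ℂ) = Complex.exp (Complex.log z * ℓ) :=
    Complex.cpow_def_of_ne_zero hz _
  have hlogre : (Complex.log z * (ℓ:ℂ)).re = Real.log r * ℓ := by
    simp [Complex.mul_re, Complex.log_re, Complex.log_im, hrdef]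
  have hlogim : (Complex.log z * (ℓ:ℂ)).im = θ * ℓ := by
    simp [Complex.mul_im, Complex.log_re, Complex.log_im, hθdef]
  have habs : ‖z ^ (ℓ:ℂ)‖ = r ^ ℓ := by
    rw [hcpow, Complex.norm_exp, hlogre, Real.rpow_def_of_pos hr]
  have hre : (z ^ (ℓ:ℂ)).re = r ^ ℓ * Real.cos (ℓ * θ) := by
    rw [hcpow, Complex.exp_re, hlogre, hlogim, Real.rpow_def_of_pos hr, mul_comm θ ℓ]
  -- from hmem : r^ℓ * r^ℓ < x₀^ℓ * re(z^ℓ)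
  have hrl : 0 < r ^ ℓ := Real.rpow_pos_of_pos hr ℓ
  have hxl : 0 < x₀ ^ ℓ := Real.rpow_pos_of_pos hx₀ ℓ
  have hmem' : ‖z ^ (ℓ:ℂ) - ((x₀ ^ ℓ / 2 : ℝ):ℂ)‖ < x₀ ^ ℓ / 2 := by
    rw [Metric.mem_ball, Complex.dist_eq] at hmem; exact hmem
  have hsq : ((z ^ (ℓ:ℂ)).re - x₀ ^ ℓ / 2) ^ 2 + (z ^ (ℓ:ℂ)).im ^ 2 < (x₀ ^ ℓ / 2) ^ 2 := by
    have h2 := pow_lt_pow_left₀ hmem' (norm_nonneg _) (n := 2) two_ne_zero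
    rw [Complex.sq_norm, Complex.normSq_apply] at h2
    simp only [Complex.sub_re, Complex.sub_im, Complex.ofReal_re, Complex.ofReal_im,
      sub_zero] at h2
    nlinarith [h2]
  have hsum : (z ^ (ℓ:ℂ)).re ^ 2 + (z ^ (ℓ:ℂ)).im ^ 2 = (r ^ ℓ) ^ 2 := by
    rw [← habs, Complex.sq_norm, Complex.normSq_apply]; ring
  have hkey1 : r ^ ℓ * r ^ ℓ < x₀ ^ ℓ * (z ^ (ℓ:ℂ)).re := by nlinarith [hsq, hsum]
  have hkey2 : r ^ ℓ < x₀ ^ ℓ * Real.cos (ℓ * θ) := by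
    rw [hre] at hkey1
    have := lt_of_mul_lt_mul_right (by nlinarith [hkey1] : r ^ ℓ * r ^ ℓ < (x₀ ^ ℓ * Real.cos (ℓ * θ)) * r ^ ℓ) hrl.le
    exact this
  -- angle bounds
  have habsθ : |θ| ≤ ℓ * |θ| := le_mul_of_one_le_left (abs_nonneg θ) hℓ
  have hθhalf : |θ| < π / 2 := lt_of_le_of_lt habsθ hargℓ
  have hcosθ : 0 < Real.cos θ := by
    rw [← Real.cos_abs]
    exact Real.cos_pos_of_mem_Ioo ⟨by have := abs_nonneg θ; linarith, hθhalf⟩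
  have hkey3 : Real.cos (ℓ * θ) ≤ Real.cos θ ^ ℓ := by
    have h1 : Real.cos (ℓ * θ) = Real.cos (ℓ * |θ|) := by
      rw [← Real.cos_abs (ℓ * θ), abs_mul, abs_of_nonneg hℓ0.le]
    rw [h1, ← Real.cos_abs θ]
    exact key_cos ℓ |θ| hℓ (abs_nonneg θ) hargℓ
  have hkey4 : r ^ ℓ < (x₀ * Real.cos θ) ^ ℓ := by
    rw [Real.mul_rpow hx₀.le hcosθ.le]
    calc r ^ ℓ < x₀ ^ ℓ * Real.cos (ℓ * θ) := hkey2
      _ ≤ x₀ ^ ℓ * Real.cos θ ^ ℓ := by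
          exact mul_le_mul_of_nonneg_left hkey3 hxl.le
  have hkey5 : r < x₀ * Real.cos θ := by
    by_contra h
    push_neg at h
    exact absurd (Real.rpow_le_rpow (by positivity) h hℓ0.le) (not_le.2 hkey4)
  -- finish
  have hzre : z.re = r * Real.cos θ := by
    have := Complex.cos_arg hz
    rw [← hθdef, ← hrdef] at this
    rw [this]; field_simp
  have hzsum : z.re ^ 2 + z.im ^ 2 = r ^ 2 := by
    rw [hrdef, Complex.sq_norm, Complex.normSq_apply]; ring
  clear_value θ r
  rw [Metric.mem_ball, Complex.dist_eq]
  have hgoal : ‖z - ((x₀ / 2 : ℝ):ℂ)‖ ^ 2 < (x₀ / 2) ^ 2 := by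
    rw [Complex.sq_norm, Complex.normSq_apply]
    simp only [Complex.sub_re, Complex.sub_im, Complex.ofReal_re, Complex.ofReal_im, sub_zero]
    have h1 : r * r < x₀ * z.re := by
      have h := mul_lt_mul_of_pos_right hkey5 hr
      calc r * r < x₀ * Real.cos θ * r := h
        _ = x₀ * z.re := by rw [hzre]; ring
    linarith [h1, hzsum, sq_nonneg (z.re - x₀ / 2), sq_nonneg z.im]
  exact lt_of_pow_lt_pow_left₀ 2 (by positivity) hgoal
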